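/- For any compact convex set X ⊂ ℝ^d with nonempty interior, any point x* ∈ X, and any radius r with 0 < r < diam(X), the Lebesgue measure of B(x*, r) ∩ X satisfies μ(B(x*, r) ∩ X) / μ(X) ≥ (r / diam(X))^d. -/

import Mathlib

open Metric Set MeasureTheory

theorem stmt2 (d : ℕ) (X : Set (EuclideanSpace ℝ (Fin d))) (hXc : IsCompact X)
    (hconv : Convex ℝ X) (hint : (interior X).Nonempty) (x : EuclideanSpace ℝ (Fin d))
    (hx : x ∈ X) (r : ℝ) (hr : 0 < r) (hrd : r < Metric.diam X) :
    ENNReal.ofReal ((r / Metric.diam X) ^ d) ≤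
      volume (closedBall x r ∩ X) / volume X := by
  have hD : 0 < Metric.diam X := hr.trans hrd
  set t : ℝ := r / Metric.diam X with ht
  have ht0 : 0 < t := div_pos hr hD
  have ht1 : t ≤ 1 := by
    rw [ht, div_le_one hD]; exact hrd.le
  have hXvol0 : volume X ≠ 0 := by
    have : 0 < volume (interior X) := isOpen_interior.measure_pos volume hint
    exact fun h => by simp [measure_mono_null interior_subset h] at this
  have hXvolT : volume X ≠ ⊤ := hXc.measure_lt_top.ne
  rw [ENNReal.le_div_iff_mul_le (Or.inl hXvol0) (Or.inl hXvolT)]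
  have key : AffineMap.homothety x t '' X ⊆ closedBall x r ∩ X := by
    rintro _ ⟨y, hy, rfl⟩
    constructor
    · rw [mem_closedBall]
      have : AffineMap.homothety x t y - x = t • (y - x) := by
        simp [AffineMap.homothety_apply, vsub_eq_sub, vadd_eq_add]
      rw [dist_eq_norm, this, norm_smul, Real.norm_eq_abs, abs_of_pos ht0]
      calc t * ‖y - x‖ ≤ t * Metric.diam X := by
            apply mul_le_mul_of_nonneg_left _ ht0.le
            rw [← dist_eq_norm]
            exact dist_le_diam_of_mem hXc.isBounded hy hx
        _ = r := by rw [ht]; field_simp [hD.ne']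
    · have : AffineMap.homothety x t y = (1 - t) • x + t • y := by
        simp [AffineMap.homothety_apply, vsub_eq_sub, vadd_eq_add, sub_smul, smul_sub]; abel
      rw [this]
      exact hconv hx hy (by linarith) ht0.le (by ring)
  calc ENNReal.ofReal ((r / Metric.diam X) ^ d) * volume X
      = volume (AffineMap.homothety x t '' X) := by
        rw [Measure.addHaar_image_homothety, finrank_euclideanSpace_fin, abs_of_pos (pow_pos ht0 d)]
    _ ≤ volume (closedBall x r ∩ X) := measure_mono key
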